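/- Let p be a log-concave probability mass function on ℤ and let α ∈ (0,∞). Then H_α(p) − H_∞(p) < log(α^{1/(α−1)}), where for α = 1 the right-hand side is interpreted as log e = 1 (natural logarithm). In particular, for the Shannon entropy, H(p) − H_∞(p) < 1. -/

import Mathlib

open Real

/-- `p` is a probability mass function on `ℤ`. -/
def IsPMF (p : ℤ → ℝ) : Prop :=
  (∀ n, 0 ≤ p n) ∧ Summable p ∧ ∑' n, p n = 1

/-- `p` is log-concave: `p(n)² ≥ p(n−1)·p(n+1)` and contiguous support. -/
def IsLogConcavePMF (p : ℤ → ℝ) : Prop :=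
  (∀ n : ℤ, p (n - 1) * p (n + 1) ≤ p n ^ 2) ∧
  (∀ a b c : ℤ, a ≤ b → b ≤ c → 0 < p a → 0 < p c → 0 < p b)

/-- Rényi entropy of order `α > 0` (Shannon entropy at `α = 1`), natural logarithm. -/
noncomputable def renyiEnt (α : ℝ) (p : ℤ → ℝ) : ℝ :=
  if α = 1 then -∑' n, p n * Real.log (p n)
  else (1 - α)⁻¹ * Real.log (∑' n, p n ^ α)

/-- Min-entropy `H_∞(p) = −log sup_n p(n)`. -/
noncomputable def minEnt (p : ℤ → ℝ) : ℝ := -Real.log (⨆ n, p n)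

namespace RMC
open Set


variable {α : ℝ}

noncomputable def GG (α x : ℝ) : ℝ :=
  (α-1) * (2*α*(1-x) - 2*(1-x^α) - (α-1)*(1-x)*(1-x^α))

noncomputable def GG' (α x : ℝ) : ℝ :=
  (α-1) * (-(2*α) + 2*α*x^(α-1) + (α-1)*((1-x^α) + α*x^(α-1)*(1-x)))

noncomputable def GG'' (α x : ℝ) : ℝ :=
  (α-1)^2 * α * (α+1) * x^(α-2) * (1-x)

lemma hasDerivAt_GG {x : ℝ} (hx : 0 < x) :
    HasDerivAt (GG α) (GG' α x) x := by
  have h1 : HasDerivAt (fun x : ℝ => x ^ α) (α * x ^ (α-1)) x :=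
    Real.hasDerivAt_rpow_const (Or.inl hx.ne')
  have h2 : HasDerivAt (fun x : ℝ => (1:ℝ) - x ^ α) (-(α * x ^ (α-1))) x := (h1.const_sub 1)
  have h3 : HasDerivAt (fun x : ℝ => (1:ℝ) - x) (-1) x := by
    simpa using (hasDerivAt_id x).const_sub 1
  have h4 : HasDerivAt (fun x : ℝ => 2*α*(1-x) - 2*(1-x^α) - (α-1)*((1-x)*(1-x^α)))
      (2*α*(-1) - 2*(-(α * x ^ (α-1))) - (α-1)*((-1)*(1-x^α) + (1-x)*(-(α * x ^ (α-1))))) x :=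
    (((h3.const_mul (2*α)).sub (h2.const_mul 2)).sub ((h3.mul h2).const_mul (α-1)))
  have h5 := h4.const_mul (α-1)
  have h6 : HasDerivAt (GG α)
      ((α-1) * (2*α*(-1) - 2*(-(α * x ^ (α-1))) - (α-1)*((-1)*(1-x^α) + (1-x)*(-(α * x ^ (α-1)))))) x :=
    h5.congr_of_eventuallyEq (Filter.Eventually.of_forall fun y => by unfold GG; ring)
  have hval : GG' α x
      = (α-1) * (2*α*(-1) - 2*(-(α * x ^ (α-1))) - (α-1)*((-1)*(1-x^α) + (1-x)*(-(α * x ^ (α-1))))) := by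
    unfold GG'; ring
  rw [hval]; exact h6

lemma hasDerivAt_GG' {x : ℝ} (hx : 0 < x) :
    HasDerivAt (GG' α) (GG'' α x) x := by
  have h1 : HasDerivAt (fun x : ℝ => x ^ (α-1)) ((α-1) * x ^ (α-1-1)) x :=
    Real.hasDerivAt_rpow_const (Or.inl hx.ne')
  have h1' : HasDerivAt (fun x : ℝ => x ^ α) (α * x ^ (α-1)) x :=
    Real.hasDerivAt_rpow_const (Or.inl hx.ne')
  have h3 : HasDerivAt (fun x : ℝ => (1:ℝ) - x) (-1) x := by
    simpa using (hasDerivAt_id x).const_sub 1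
  have h4 := ((h1.const_mul (2*α)).const_add (-(2*α))).add
      (((h1'.const_sub 1).add ((h1.mul h3).const_mul α)).const_mul (α-1))
  have h5 := h4.const_mul (α-1)
  have h7 : HasDerivAt (GG' α)
      ((α - 1) * (2 * α * ((α - 1) * x ^ (α - 1 - 1)) + (α - 1) * (-(α * x ^ (α - 1)) + α * ((α - 1) * x ^ (α - 1 - 1) * (1 - x) + x ^ (α - 1) * -1)))) x :=
    h5.congr_of_eventuallyEq (Filter.Eventually.of_forall fun y => by unfold GG'; simp only [Pi.add_apply, Pi.mul_apply]; ring)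
  have e1 : x ^ (α-1) = x ^ (α-2) * x := by
    rw [show α-1 = (α-2)+1 by ring, Real.rpow_add hx, Real.rpow_one]
  have e2 : x ^ (α-1-1) = x ^ (α-2) := by rw [show α-1-1 = α-2 by ring]
  have hval : GG'' α x
      = (α-1) * (2*α*((α-1) * x ^ (α-1-1)) + (α-1)*(-(α * x ^ (α-1)) + α*((α-1) * x ^ (α-1-1)*(1-x) + x^(α-1)*(-1)))) := by
    unfold GG''; rw [e1, e2]; ring
  rw [hval]; exact h7

lemma GG'_neg (hα : 0 < α) (hne : α ≠ 1) {x : ℝ} (hx : x ∈ Ioo (0:ℝ) 1) :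
    GG' α x < 0 := by
  have h1 : GG' α 1 = 0 := by
    unfold GG'; simp [Real.one_rpow]
  have key : StrictMonoOn (GG' α) (Icc x 1) := by
    apply strictMonoOn_of_deriv_pos (convex_Icc _ _)
    · intro y hy
      have hy0 : 0 < y := lt_of_lt_of_le hx.1 hy.1
      exact ((hasDerivAt_GG' hy0).continuousAt).continuousWithinAt
    · intro y hy
      rw [interior_Icc] at hy
      have hy0 : 0 < y := hx.1.trans hy.1
      rw [(hasDerivAt_GG' hy0).deriv]
      unfold GG''
      have h2 : (0:ℝ) < (α-1)^2 := by
        have : α - 1 ≠ 0 := sub_ne_zero.mpr hne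
        positivity
      have h3 : (0:ℝ) < y ^ (α-2) := Real.rpow_pos_of_pos hy0 _
      have h5 : (0:ℝ) < 1 - y := by linarith [hy.2]
      positivity
  have := key (left_mem_Icc.mpr hx.2.le) (right_mem_Icc.mpr hx.2.le) hx.2
  linarith [h1 ▸ this]

lemma GG_pos (hα : 0 < α) (hne : α ≠ 1) {x : ℝ} (hx : x ∈ Ico (0:ℝ) 1) :
    0 < GG α x := by
  have h1 : GG α 1 = 0 := by unfold GG; simp
  have c1 : ContinuousOn (fun x:ℝ => x ^ α) (Icc (0:ℝ) 1) := fun y _ =>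
    (Real.continuousAt_rpow_const y α (Or.inr hα.le)).continuousWithinAt
  have key : StrictAntiOn (GG α) (Icc (0:ℝ) 1) := by
    apply strictAntiOn_of_deriv_neg (convex_Icc _ _)
    · unfold GG
      exact continuousOn_const.mul
        (((continuousOn_const.mul (continuousOn_const.sub continuousOn_id)).sub
          (continuousOn_const.mul (continuousOn_const.sub c1))).sub
          (((continuousOn_const.mul (continuousOn_const.sub continuousOn_id)).mul
            (continuousOn_const.sub c1))))
    · intro y hy
      rw [interior_Icc] at hy
      rw [(hasDerivAt_GG hy.1).deriv]
      exact GG'_neg hα hne hy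
  have := key (Icc_subset_Icc_left (le_refl 0) ⟨hx.1, hx.2.le⟩)
      (right_mem_Icc.mpr (by linarith [hx.1])) hx.2
  linarith [h1 ▸ this]

/-- Claim A, case `α > 1`. -/
lemma claimA_gt (hα : 1 < α) {t : ℝ} (ht0 : 0 ≤ t) (ht1 : t < 1) :
    (α-1)/2 + 1/(1-t) < α/(1-t^α) := by
  have hA : (0:ℝ) < 1 - t := by linarith
  have hB : (0:ℝ) < 1 - t^α := by
    have : t^α < 1 := by
      rcases eq_or_lt_of_le ht0 with h|h
      · rw [← h, Real.zero_rpow (by linarith : α ≠ 0)]; norm_num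
      · exact Real.rpow_lt_one ht0 ht1 (by linarith)
    linarith
  have hG := GG_pos (by linarith : 0 < α) (by linarith : α ≠ 1) ⟨ht0, ht1⟩
  unfold GG at hG
  have hG2 : 0 < 2*α*(1-t) - 2*(1-t^α) - (α-1)*(1-t)*(1-t^α) := by
    rcases mul_pos_iff.mp hG with ⟨h1, h2⟩|⟨h1, h2⟩
    · exact h2
    · linarith
  have heq : α/(1-t^α) - ((α-1)/2 + 1/(1-t))
      = (2*α*(1-t) - 2*(1-t^α) - (α-1)*(1-t)*(1-t^α)) / (2*(1-t)*(1-t^α)) := by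
    field_simp
    ring
  have := div_pos hG2 (by positivity : (0:ℝ) < 2*(1-t)*(1-t^α))
  linarith [heq ▸ this]

/-- Claim A, case `α < 1`. -/
lemma claimA_lt (hα0 : 0 < α) (hα : α < 1) {t : ℝ} (ht0 : 0 ≤ t) (ht1 : t < 1) :
    α/(1-t^α) < (α-1)/2 + 1/(1-t) := by
  have hA : (0:ℝ) < 1 - t := by linarith
  have hB : (0:ℝ) < 1 - t^α := by
    have : t^α < 1 := by
      rcases eq_or_lt_of_le ht0 with h|h
      · rw [← h, Real.zero_rpow (by linarith : α ≠ 0)]; norm_num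
      · exact Real.rpow_lt_one ht0 ht1 hα0
    linarith
  have hG := GG_pos hα0 (by linarith : α ≠ 1) ⟨ht0, ht1⟩
  unfold GG at hG
  have hG2 : 2*α*(1-t) - 2*(1-t^α) - (α-1)*(1-t)*(1-t^α) < 0 := by
    rcases mul_pos_iff.mp hG with ⟨h1, h2⟩|⟨h1, h2⟩
    · linarith
    · exact h2
  have heq : α/(1-t^α) - ((α-1)/2 + 1/(1-t))
      = (2*α*(1-t) - 2*(1-t^α) - (α-1)*(1-t)*(1-t^α)) / (2*(1-t)*(1-t^α)) := by
    field_simp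
    ring
  have := div_neg_of_neg_of_pos hG2 (by positivity : (0:ℝ) < 2*(1-t)*(1-t^α))
  linarith [heq ▸ this]

/-- Claim A₁ for the Shannon case: `t log t + (1-t²)/2 > 0` on `[0,1)`. -/
lemma claimA_one {t : ℝ} (ht0 : 0 ≤ t) (ht1 : t < 1) :
    0 < t * Real.log t + (1 - t^2)/2 := by
  have h1 : (fun t : ℝ => t * Real.log t + (1 - t^2)/2) 1 = 0 := by norm_num
  have key : StrictAntiOn (fun t : ℝ => t * Real.log t + (1 - t^2)/2) (Icc (0:ℝ) 1) := by
    apply strictAntiOn_of_deriv_neg (convex_Icc _ _)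
    · exact (Real.continuous_mul_log.continuousOn.add
        ((continuous_const.sub (continuous_pow 2)).continuousOn.div_const 2))
    · intro y hy
      rw [interior_Icc] at hy
      have hd : HasDerivAt (fun t : ℝ => t * Real.log t + (1 - t^2)/2)
          ((Real.log y + 1) + (-(2*y))/2) y := by
        have := (Real.hasDerivAt_mul_log hy.1.ne').add
          (((hasDerivAt_pow 2 y).const_sub 1).div_const 2)
        exact this.congr_deriv (by norm_num)
      rw [hd.deriv]
      have := Real.log_lt_sub_one_of_pos hy.1 (by linarith [hy.2] : y ≠ 1)
      linarith
  have h2 := key ⟨ht0, ht1.le⟩ (right_mem_Icc.mpr zero_le_one) ht1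
  norm_num at h2
  exact h2



section Seq

variable {q : ℕ → ℝ}

lemma seq_antitone_succ (hnn : ∀ k, 0 ≤ q k) (hmax : ∀ k, q k ≤ q 0)
    (hlc : ∀ k, q (k+2) * q k ≤ q (k+1)^2) (hz : ∀ k, q k = 0 → q (k+1) = 0) :
    ∀ k, q (k+1) ≤ q k := by
  intro k
  induction k with
  | zero => exact hmax 1
  | succ n ih =>
    rcases eq_or_lt_of_le (hnn n) with h|h
    · have h1 : q (n+1) = 0 := hz n h.symm
      rw [hz (n+1) h1]
      exact hnn (n+1)
    · have h2 : q (n+2) * q n ≤ q (n+1) * q n := by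
        calc q (n+2) * q n ≤ q (n+1)^2 := hlc n
        _ = q (n+1) * q (n+1) := by ring
        _ ≤ q (n+1) * q n := mul_le_mul_of_nonneg_left ih (hnn (n+1))
      exact le_of_mul_le_mul_right h2 h

lemma seq_anti (hnn : ∀ k, 0 ≤ q k) (hmax : ∀ k, q k ≤ q 0)
    (hlc : ∀ k, q (k+2) * q k ≤ q (k+1)^2) (hz : ∀ k, q k = 0 → q (k+1) = 0) :
    Antitone q :=
  antitone_nat_of_succ_le (seq_antitone_succ hnn hmax hlc hz)

lemma seq_ratio (hnn : ∀ k, 0 ≤ q k) (hmax : ∀ k, q k ≤ q 0)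
    (hlc : ∀ k, q (k+2) * q k ≤ q (k+1)^2) (hz : ∀ k, q k = 0 → q (k+1) = 0) :
    ∀ i l, i ≤ l → q i * q (l+1) ≤ q (i+1) * q l := by
  intro i l hil
  induction l with
  | zero =>
    have : i = 0 := Nat.le_zero.mp hil
    subst this
    exact le_of_eq (mul_comm _ _)
  | succ n ih =>
    rcases Nat.lt_or_ge i (n+1) with h|h
    · have ih2 := ih (Nat.lt_succ_iff.mp h)
      rcases eq_or_lt_of_le (hnn n) with hq|hq
      · -- q n = 0, so q (n+1) = 0 and q (n+2) = 0
        have h1 : q (n+1) = 0 := hz n hq.symm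
        have h2 : q (n+1+1) = 0 := hz (n+1) h1
        rw [h2, h1, mul_zero]
        exact mul_nonneg (hnn (i+1)) (le_refl 0)
      · have h2 : q i * q (n+1+1) * q n ≤ q (i+1) * q (n+1) * q n := by
          calc q i * q (n+1+1) * q n = q i * (q (n+2) * q n) := by ring
          _ ≤ q i * q (n+1)^2 := mul_le_mul_of_nonneg_left (hlc n) (hnn i)
          _ = (q i * q (n+1)) * q (n+1) := by ring
          _ ≤ (q (i+1) * q n) * q (n+1) := mul_le_mul_of_nonneg_right ih2 (hnn (n+1))
          _ = q (i+1) * q (n+1) * q n := by ring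
        exact le_of_mul_le_mul_right h2 hq
    · have : i = n+1 := le_antisymm hil h
      subst this
      exact le_of_eq (mul_comm _ _)

lemma seq_zero_prop (hz : ∀ k, q k = 0 → q (k+1) = 0) :
    ∀ j k, j ≤ k → q j = 0 → q k = 0 := by
  intro j k hjk h0
  induction k with
  | zero => rwa [Nat.le_zero.mp hjk] at h0
  | succ n ih =>
    rcases Nat.lt_or_ge j (n+1) with h|h
    · exact hz n (ih (Nat.lt_succ_iff.mp h))
    · rwa [le_antisymm hjk h] at h0

lemma seq_geom_bound (hnn : ∀ k, 0 ≤ q k) (hmax : ∀ k, q k ≤ q 0)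
    (hlc : ∀ k, q (k+2) * q k ≤ q (k+1)^2) (hz : ∀ k, q k = 0 → q (k+1) = 0)
    (hsum : Summable q) (h0 : 0 < q 0) :
    ∃ C ρ : ℝ, 0 < C ∧ 0 < ρ ∧ ρ < 1 ∧ ∀ k, q k ≤ C * ρ^k := by
  have hanti := seq_anti hnn hmax hlc hz
  have hdec : ∃ k, q (k+1) < q k := by
    by_contra hcon
    push_neg at hcon
    have hconst : ∀ k, q k = q 0 := by
      intro k
      induction k with
      | zero => rfl
      | succ n ih => exact le_antisymm (hmax (n+1)) (ih ▸ hcon n)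
    have h1 := hsum.tendsto_atTop_zero
    have h2 : Filter.Tendsto q Filter.atTop (nhds (q 0)) := by
      rw [funext hconst]; exact tendsto_const_nhds
    exact absurd (tendsto_nhds_unique h1 h2) h0.ne
  obtain ⟨k0, hk0⟩ := hdec
  rcases eq_or_lt_of_le (hnn (k0+1)) with hq|hq
  · -- finite support beyond k0+1
    refine ⟨q 0 / (1/2:ℝ)^(k0+1), 1/2, by positivity, by norm_num, by norm_num, fun k => ?_⟩
    rcases Nat.lt_or_ge k (k0+1) with h|h
    · have h1 : ((1:ℝ)/2)^(k0+1) ≤ (1/2:ℝ)^k :=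
        pow_le_pow_of_le_one (by norm_num) (by norm_num) h.le
      calc q k ≤ q 0 := hmax k
      _ = q 0 / (1/2:ℝ)^(k0+1) * (1/2:ℝ)^(k0+1) := by field_simp
      _ ≤ q 0 / (1/2:ℝ)^(k0+1) * (1/2:ℝ)^k :=
        mul_le_mul_of_nonneg_left h1 (by positivity)
    · have : q k = 0 := seq_zero_prop hz (k0+1) k h hq.symm
      rw [this]
      positivity
  · -- q (k0+1) > 0; geometric decay with ratio q(k0+1)/q k0
    have hqk0 : 0 < q k0 := lt_of_lt_of_le hq (seq_antitone_succ hnn hmax hlc hz k0)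
    set ρ : ℝ := q (k0+1) / q k0 with hρdef
    have hρ0 : 0 < ρ := div_pos hq hqk0
    have hρ1 : ρ < 1 := (div_lt_one hqk0).mpr hk0
    have hstep : ∀ k, k0 ≤ k → q (k+1) ≤ ρ * q k := by
      intro k hk
      have := seq_ratio hnn hmax hlc hz k0 k hk
      rw [hρdef, div_mul_eq_mul_div, le_div_iff₀ hqk0]
      calc q (k+1) * q k0 = q k0 * q (k+1) := by ring
      _ ≤ q (k0+1) * q k := this
    have hind : ∀ j, q (k0 + j) ≤ q 0 * ρ^j := by
      intro j
      induction j with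
      | zero => simpa using hmax k0
      | succ n ih =>
        calc q (k0 + (n+1)) = q ((k0 + n) + 1) := by ring_nf
        _ ≤ ρ * q (k0 + n) := hstep _ (Nat.le_add_right _ _)
        _ ≤ ρ * (q 0 * ρ^n) := mul_le_mul_of_nonneg_left ih hρ0.le
        _ = q 0 * ρ^(n+1) := by ring
    refine ⟨q 0 / ρ^k0, ρ, by positivity, hρ0, hρ1, fun k => ?_⟩
    rcases Nat.lt_or_ge k k0 with h|h
    · have h1 : ρ^k0 ≤ ρ^k := pow_le_pow_of_le_one hρ0.le hρ1.le h.le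
      calc q k ≤ q 0 := hmax k
      _ = q 0 / ρ^k0 * ρ^k0 := by field_simp
      _ ≤ q 0 / ρ^k0 * ρ^k := mul_le_mul_of_nonneg_left h1 (by positivity)
    · have h2 := hind (k - k0)
      rw [Nat.add_sub_cancel' h] at h2
      calc q k ≤ q 0 * ρ^(k - k0) := h2
      _ = q 0 * (ρ^k / ρ^k0) := by rw [pow_sub₀ ρ hρ0.ne' h]; ring
      _ = q 0 / ρ^k0 * ρ^k := by ring

/-- Once strictly below the geometric `q 0 * t^j`, the sequence stays (weakly) below. -/
lemma seq_cross (hnn : ∀ k, 0 ≤ q k) (hmax : ∀ k, q k ≤ q 0)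
    (hlc : ∀ k, q (k+2) * q k ≤ q (k+1)^2) (hz : ∀ k, q k = 0 → q (k+1) = 0)
    {t : ℝ} (ht0 : 0 < t) {j k : ℕ} (hjk : j ≤ k) (hj : q j < q 0 * t^j) :
    q k ≤ q 0 * t^k := by
  by_contra hk
  push_neg at hk
  have hanti := seq_anti hnn hmax hlc hz
  have hj1 : 1 ≤ j := by
    rcases Nat.eq_zero_or_pos j with h|h
    · subst h; simp at hj
    · exact h
  have hjklt : j < k := by
    rcases eq_or_lt_of_le hjk with h|h
    · subst h; linarith
    · exact h
  -- there is i* with j ≤ i* < k and t * q i* < q (i*+1)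
  have hex : ∃ i, j ≤ i ∧ i < k ∧ t * q i < q (i+1) := by
    by_contra hcon
    push_neg at hcon
    -- then q k ≤ t^(k-j) * q j
    have hch : ∀ n, j + n ≤ k → q (j + n) ≤ t^n * q j := by
      intro n
      induction n with
      | zero => intro _; simp
      | succ m ih =>
        intro hle
        have hm : j + m < k := by omega
        have h1 : q (j + m + 1) ≤ t * q (j + m) := hcon (j+m) (Nat.le_add_right _ _) hm
        calc q (j + (m+1)) = q ((j + m) + 1) := by ring_nf
        _ ≤ t * q (j + m) := h1
        _ ≤ t * (t^m * q j) := mul_le_mul_of_nonneg_left (ih (by omega)) ht0.le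
        _ = t^(m+1) * q j := by ring
    have h2 := hch (k - j) (by omega)
    rw [Nat.add_sub_cancel' hjk] at h2
    have h3 : t^(k-j) * q j < t^(k-j) * (q 0 * t^j) :=
      mul_lt_mul_of_pos_left hj (pow_pos ht0 _)
    have h5 : t^(k-j) * t^j = t^k := by
      rw [← pow_add]
      congr 1
      omega
    have h6 : t ^ (k - j) * (q 0 * t ^ j) = q 0 * t ^ k := by
      calc t ^ (k - j) * (q 0 * t ^ j) = q 0 * (t ^ (k-j) * t ^ j) := by ring
      _ = q 0 * t ^ k := by rw [h5]
    linarith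
  obtain ⟨i, hji, hik, hi⟩ := hex
  -- all earlier ratios exceed t as well
  have hqi1 : 0 < q (i+1) := lt_of_le_of_lt (mul_nonneg ht0.le (hnn i)) hi
  have hqipos : 0 < q i := lt_of_lt_of_le hqi1 (seq_antitone_succ hnn hmax hlc hz i)
  have hrat : ∀ l, l ≤ i → t * q l < q (l+1) := by
    intro l hl
    have h1 := seq_ratio hnn hmax hlc hz l i hl
    have hql : 0 < q l := lt_of_lt_of_le hqipos (hanti hl)
    -- t * q l * q i < q l * q (i+1) ≤ q (l+1) * q i
    have h2 : t * q l * q i < q (l+1) * q i := by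
      calc t * q l * q i = q l * (t * q i) := by ring
      _ < q l * q (i+1) := mul_lt_mul_of_pos_left hi hql
      _ ≤ q (l+1) * q i := h1
    exact lt_of_mul_lt_mul_right h2 (hnn i)
  -- chain up from 0: q l > q 0 * t^l for 1 ≤ l ≤ i+1
  have hchain : ∀ l, l ≤ i + 1 → 1 ≤ l → q 0 * t^l < q l := by
    intro l
    induction l with
    | zero => intro _ h; exact absurd h (by norm_num)
    | succ m ih =>
      intro hle _
      rcases Nat.eq_zero_or_pos m with hm|hm
      · subst hm
        have := hrat 0 (by omega)
        simpa [pow_one, mul_comm] using this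
      · have h1 : q 0 * t^m < q m := ih (by omega) hm
        have h2 := hrat m (by omega)
        calc q 0 * t^(m+1) = t * (q 0 * t^m) := by ring
        _ < t * q m := mul_lt_mul_of_pos_left h1 ht0
        _ < q (m+1) := h2
  exact absurd (hchain j (by omega) hj1) (by linarith)

/-- Summation-by-parts positivity: antitone weights against a once-crossing mean-zero seq. -/
lemma cross_sum (w d : ℕ → ℝ) (K : ℕ) (hd : Summable d) (h0 : ∑' k, d k = 0)
    (hpos : ∀ k, k < K → 0 ≤ d k) (hneg : ∀ k, K ≤ k → d k ≤ 0)
    (hw : ∀ i j, i ≤ j → w j ≤ w i) (hwd : Summable (fun k => w k * d k)) :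
    0 ≤ ∑' k, w k * d k := by
  have h1 : ∀ k, 0 ≤ (w k - w K) * d k := by
    intro k
    rcases Nat.lt_or_ge k K with h|h
    · exact mul_nonneg (by linarith [hw k K h.le]) (hpos k h)
    · have h1' : w k - w K ≤ 0 := by linarith [hw K k h]
      nlinarith [hneg k h]
  have hsub : Summable (fun k => (w k - w K) * d k) := by
    have : (fun k => (w k - w K) * d k) = fun k => w k * d k - w K * d k := by
      funext k; ring
    rw [this]
    exact hwd.sub (hd.mul_left (w K))
  calc (0:ℝ) ≤ ∑' k, (w k - w K) * d k := tsum_nonneg h1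
  _ = ∑' k, (w k * d k - w K * d k) := by congr 1; funext k; ring
  _ = (∑' k, w k * d k) - ∑' k, w K * d k := Summable.tsum_sub hwd (hd.mul_left (w K))
  _ = ∑' k, w k * d k := by rw [tsum_mul_left, h0, mul_zero, sub_zero]

end Seq


/-- Tangent line inequality for convex rpow, `α > 1`. -/
lemma tangent_gt {α : ℝ} (hα : 1 < α) {g x : ℝ} (hg : 0 < g) (hx : 0 ≤ x) :
    g^α + (α * g^(α-1)) * (x - g) ≤ x^α := by
  have hs : -1 ≤ x/g - 1 := by
    have : 0 ≤ x/g := div_nonneg hx hg.le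
    linarith
  have h := one_add_mul_self_le_rpow_one_add hs hα.le
  rw [show (1:ℝ) + (x/g - 1) = x/g by ring] at h
  rw [Real.div_rpow hx hg.le] at h
  have hgα : 0 < g^α := Real.rpow_pos_of_pos hg α
  have h2 := mul_le_mul_of_nonneg_left h hgα.le
  rw [mul_comm (g^α) (x^α / g^α), div_mul_cancel₀ _ hgα.ne'] at h2
  have e : g^α * (1 + α*(x/g-1)) = g^α + (α*g^(α-1))*(x-g) := by
    rw [Real.rpow_sub_one hg.ne']
    field_simp
  linarith [e ▸ h2]

/-- Tangent line inequality for concave rpow, `0 < α < 1`. -/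
lemma tangent_lt {α : ℝ} (hα0 : 0 < α) (hα : α < 1) {g x : ℝ} (hg : 0 < g) (hx : 0 ≤ x) :
    x^α ≤ g^α + (α * g^(α-1)) * (x - g) := by
  have hs : -1 ≤ x/g - 1 := by
    have : 0 ≤ x/g := div_nonneg hx hg.le
    linarith
  have h := rpow_one_add_le_one_add_mul_self hs hα0.le hα.le
  rw [show (1:ℝ) + (x/g - 1) = x/g by ring] at h
  rw [Real.div_rpow hx hg.le] at h
  have hgα : 0 < g^α := Real.rpow_pos_of_pos hg α
  have h2 := mul_le_mul_of_nonneg_left h hgα.le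
  rw [mul_comm (g^α) (x^α / g^α), div_mul_cancel₀ _ hgα.ne'] at h2
  have e : g^α * (1 + α*(x/g-1)) = g^α + (α*g^(α-1))*(x-g) := by
    rw [Real.rpow_sub_one hg.ne']
    field_simp
  linarith [e ▸ h2]

/-- Tangent line inequality for convex `x log x`. -/
lemma tangent_log {g x : ℝ} (hg : 0 < g) (hx : 0 ≤ x) :
    g * Real.log g + (1 + Real.log g) * (x - g) ≤ x * Real.log x := by
  rcases eq_or_lt_of_le hx with h|h
  · rw [← h]
    have e : g * Real.log g + (1 + Real.log g) * (0 - g) = -g := by ring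
    rw [e]
    simp
    linarith
  · have hl := Real.log_le_sub_one_of_pos (div_pos hg h)
    rw [Real.log_div hg.ne' h.ne'] at hl
    have h2 := mul_le_mul_of_nonneg_left hl h.le
    have e : x * (g/x - 1) = g - x := by field_simp
    rw [e] at h2
    nlinarith [h2]

/-- Sum of the `α`-th powers of a geometric sequence. -/
lemma geom_rpow {α : ℝ} (hα : 0 < α) {M t : ℝ} (hM : 0 ≤ M) (ht0 : 0 ≤ t) (ht1 : t < 1) :
    HasSum (fun k : ℕ => (M * t^k)^α) (M^α * (1 - t^α)⁻¹) := by
  have htα1 : t^α < 1 := by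
    rcases eq_or_lt_of_le ht0 with h|h
    · rw [← h, Real.zero_rpow hα.ne']; norm_num
    · exact Real.rpow_lt_one ht0 ht1 hα
  have h1 : ∀ k:ℕ, M^α * (t^α)^k = (M * t^k)^α := by
    intro k
    rw [Real.mul_rpow hM (pow_nonneg ht0 k)]
    congr 1
    rw [← Real.rpow_natCast t k, ← Real.rpow_natCast (t^α) k,
      ← Real.rpow_mul ht0, ← Real.rpow_mul ht0, mul_comm]
  have h2 := (hasSum_geometric_of_lt_one (Real.rpow_nonneg ht0 α) htα1).mul_left (M^α)
  rwa [show (fun k:ℕ => M^α*(t^α)^k) = fun k => (M*t^k)^α from funext fun k => h1 k] at h2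

/-- Crossing data: either `q` is exactly geometric, or it crosses once from above. -/
lemma seq_cross_data {q : ℕ → ℝ} (hnn : ∀ k, 0 ≤ q k) (hmax : ∀ k, q k ≤ q 0)
    (hlc : ∀ k, q (k+2) * q k ≤ q (k+1)^2) (hz : ∀ k, q k = 0 → q (k+1) = 0)
    {t : ℝ} (ht0 : 0 < t)
    (hdsum : Summable (fun k => q k - q 0 * t^k))
    (hd0 : ∑' k, (q k - q 0 * t^k) = 0) :
    (∀ k, q k = q 0 * t^k) ∨
    ∃ K, (∀ k, k < K → 0 ≤ q k - q 0 * t^k) ∧ (∀ k, K ≤ k → q k - q 0 * t^k ≤ 0) := by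
  by_cases hex : ∃ k, q k - q 0 * t^k < 0
  · right
    refine ⟨Nat.find hex, fun k hk => ?_, fun k hk => ?_⟩
    · have := Nat.find_min hex hk
      linarith [not_lt.mp this]
    · have hfind := Nat.find_spec hex
      have := seq_cross hnn hmax hlc hz ht0 hk (by linarith : q (Nat.find hex) < q 0 * t^(Nat.find hex))
      linarith
  · left
    push_neg at hex
    intro k
    have h1 : q k - q 0 * t^k ≤ 0 := by
      have := Summable.le_tsum hdsum k (fun j _ => hex j)
      linarith [hd0 ▸ this]
    linarith [hex k]




lemma side_gt1 {α : ℝ} (hα : 1 < α) {q : ℕ → ℝ} (hnn : ∀ k, 0 ≤ q k)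
    (hmax : ∀ k, q k ≤ q 0) (hlc : ∀ k, q (k+2) * q k ≤ q (k+1)^2)
    (hz : ∀ k, q k = 0 → q (k+1) = 0) (hsum : Summable q) (h0 : 0 < q 0) :
    Summable (fun k => q k ^ α) ∧
    q 0 ^ α * ((α-1)/2) + q 0 ^ (α-1) * (∑' k, q k) < α * ∑' k, q k ^ α := by
  have hα0 : (0:ℝ) < α := by linarith
  set M := q 0 with hMdef
  have hMα : 0 < M ^ α := Real.rpow_pos_of_pos h0 α
  have hMα1 : 0 < M ^ (α-1) := Real.rpow_pos_of_pos h0 (α-1)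
  have hb : ∀ k, q k ^ α ≤ M^(α-1) * q k := by
    intro k
    rcases eq_or_lt_of_le (hnn k) with h|h
    · rw [← h, Real.zero_rpow hα0.ne', mul_zero]
    · have e : q k ^ α = q k ^ (α-1) * q k := by
        rw [← Real.rpow_add_one h.ne' (α-1)]
        congr 1
        ring
      rw [e]
      exact mul_le_mul_of_nonneg_right (Real.rpow_le_rpow h.le (hmax k) (by linarith)) (hnn k)
  have hsummα : Summable (fun k => q k ^ α) :=
    Summable.of_nonneg_of_le (fun k => Real.rpow_nonneg (hnn k) α) hb (hsum.mul_left (M^(α-1)))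
  refine ⟨hsummα, ?_⟩
  by_cases hq1 : q 1 ≤ 0
  · -- point mass case
    have hq10 : q 1 = 0 := le_antisymm hq1 (hnn 1)
    have hzero : ∀ k, 1 ≤ k → q k = 0 := fun k hk => seq_zero_prop hz 1 k hk hq10
    have ha : ∑' k, q k = M := tsum_eq_single 0 (fun k hk => hzero k (by omega))
    have hSα : ∑' k, q k ^ α = M ^ α := by
      refine tsum_eq_single 0 (fun k hk => ?_)
      rw [hzero k (by omega), Real.zero_rpow hα0.ne']
    rw [ha, hSα]
    have hMM : M ^ (α-1) * M = M ^ α := by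
      rw [Real.rpow_sub_one h0.ne' α]
      field_simp
    nlinarith
  · push_neg at hq1
    have ha_lt : M < ∑' k, q k := by
      have h01 : q 0 + q 1 ≤ ∑' k, q k := by
        have h := Summable.sum_le_tsum ({0,1} : Finset ℕ) (fun k _ => hnn k) hsum
        simpa using h
      linarith
    set a := ∑' k, q k with hadef
    have ha0 : 0 < a := lt_trans h0 ha_lt
    set t := 1 - M / a with htdef
    have hMa1 : M / a < 1 := (div_lt_one ha0).mpr ha_lt
    have ht0 : 0 < t := by rw [htdef]; linarith
    have ht1 : t < 1 := by
      rw [htdef]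
      have : 0 < M / a := div_pos h0 ha0
      linarith
    have h1t : 1 - t = M / a := by rw [htdef]; ring
    have hg : HasSum (fun k => M * t^k) a := by
      have h := (hasSum_geometric_of_lt_one ht0.le ht1).mul_left M
      have e : M * (1-t)⁻¹ = a := by
        rw [h1t]
        field_simp
      rwa [e] at h
    have hgs := hg.summable
    have hd : Summable (fun k => q k - M * t^k) := hsum.sub hgs
    have hd0 : ∑' k, (q k - M * t^k) = 0 := by
      rw [Summable.tsum_sub hsum hgs, hg.tsum_eq, ← hadef, sub_self]
    have htα1 : t ^ α < 1 := Real.rpow_lt_one ht0.le ht1 hα0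
    have hBα : 0 < 1 - t^α := by linarith
    have hgα := geom_rpow hα0 h0.le ht0.le ht1
    have hkey : M^α * (1 - t^α)⁻¹ ≤ ∑' k, q k ^ α := by
      rcases seq_cross_data hnn hmax hlc hz ht0 hd hd0 with hqg | ⟨K, hKpos, hKneg⟩
      · have e : ∑' k, q k ^ α = M^α * (1 - t^α)⁻¹ := by
          rw [tsum_congr (fun k => by rw [hqg k] : ∀ k, q k ^ α = (M * t^k)^α)]
          exact hgα.tsum_eq
        exact e.ge
      · set w := fun k : ℕ => α * (M * t^k) ^ (α - 1) with hwdef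
        have hgpos : ∀ k, 0 < M * t^k := fun k => by positivity
        have hwanti : ∀ i j, i ≤ j → w j ≤ w i := by
          intro i j hij
          have h1 : (M*t^j)^(α-1) ≤ (M*t^i)^(α-1) :=
            Real.rpow_le_rpow (hgpos j).le
              (mul_le_mul_of_nonneg_left (pow_le_pow_of_le_one ht0.le ht1.le hij) h0.le)
              (by linarith)
          exact mul_le_mul_of_nonneg_left h1 hα0.le
        have hwb : ∀ k, 0 ≤ w k ∧ w k ≤ α * M^(α-1) := by
          intro k
          constructor
          · exact mul_nonneg hα0.le (Real.rpow_nonneg (hgpos k).le _)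
          · have e0 : w 0 = α * M^(α-1) := by simp [hwdef]
            linarith [hwanti 0 k (Nat.zero_le k), e0.le]
        have hwd : Summable (fun k => w k * (q k - M * t^k)) := by
          rw [← summable_abs_iff]
          apply Summable.of_nonneg_of_le (fun k => abs_nonneg _) (fun k => ?_)
            ((hd.abs).mul_left (α * M^(α-1)))
          rw [abs_mul, abs_of_nonneg (hwb k).1]
          exact mul_le_mul_of_nonneg_right (hwb k).2 (abs_nonneg _)
        have hcross := cross_sum w (fun k => q k - M * t^k) K hd hd0 hKpos hKneg hwanti hwd
        have htan : ∀ k, (M*t^k)^α + w k * (q k - M*t^k) ≤ q k ^ α := fun k =>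
          tangent_gt hα (hgpos k) (hnn k)
        calc M^α*(1-t^α)⁻¹ = ∑' k, (M*t^k)^α := hgα.tsum_eq.symm
        _ ≤ ∑' k, ((M*t^k)^α + w k * (q k - M*t^k)) := by
            rw [Summable.tsum_add hgα.summable hwd]
            linarith
        _ ≤ ∑' k, q k ^ α := Summable.tsum_le_tsum htan (hgα.summable.add hwd) hsummα
    have hclaim := claimA_gt hα ht0.le ht1
    have e1 : M^α / (1 - t) = M^(α-1) * a := by
      rw [h1t, div_div_eq_mul_div, Real.rpow_sub_one h0.ne' α]
      ring
    have e2 : M^α * ((α-1)/2 + 1/(1-t)) = M^α*((α-1)/2) + M^(α-1)*a := by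
      rw [mul_add, mul_one_div, e1]
    have e3 : M^α * (α/(1-t^α)) = α * (M^α * (1-t^α)⁻¹) := by
      rw [div_eq_mul_inv]
      ring
    have hineq := mul_lt_mul_of_pos_left hclaim hMα
    rw [e2, e3] at hineq
    calc M^α*((α-1)/2) + M^(α-1)*a < α * (M^α * (1-t^α)⁻¹) := hineq
    _ ≤ α * ∑' k, q k ^ α := mul_le_mul_of_nonneg_left hkey hα0.le




lemma side_lt1 {α : ℝ} (hα0 : 0 < α) (hα : α < 1) {q : ℕ → ℝ} (hnn : ∀ k, 0 ≤ q k)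
    (hmax : ∀ k, q k ≤ q 0) (hlc : ∀ k, q (k+2) * q k ≤ q (k+1)^2)
    (hz : ∀ k, q k = 0 → q (k+1) = 0) (hsum : Summable q) (h0 : 0 < q 0) :
    Summable (fun k => q k ^ α) ∧
    α * ∑' k, q k ^ α < q 0 ^ α * ((α-1)/2) + q 0 ^ (α-1) * (∑' k, q k) := by
  set M := q 0 with hMdef
  have hMα : 0 < M ^ α := Real.rpow_pos_of_pos h0 α
  have hMα1 : 0 < M ^ (α-1) := Real.rpow_pos_of_pos h0 (α-1)
  -- summability of q^α via geometric domination
  obtain ⟨C, ρ, hC, hρ0, hρ1, hbd⟩ := seq_geom_bound hnn hmax hlc hz hsum h0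
  have hsummα : Summable (fun k => q k ^ α) := by
    have hgeo : Summable (fun k : ℕ => C^α * (ρ^α)^k) :=
      (summable_geometric_of_lt_one (Real.rpow_nonneg hρ0.le α)
        (Real.rpow_lt_one hρ0.le hρ1 hα0)).mul_left _
    apply Summable.of_nonneg_of_le (fun k => Real.rpow_nonneg (hnn k) α) (fun k => ?_) hgeo
    calc q k ^ α ≤ (C * ρ^k) ^ α := Real.rpow_le_rpow (hnn k) (hbd k) hα0.le
    _ = C^α * (ρ^α)^k := by
        rw [Real.mul_rpow hC.le (pow_nonneg hρ0.le k)]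
        congr 1
        rw [← Real.rpow_natCast ρ k, ← Real.rpow_natCast (ρ^α) k,
          ← Real.rpow_mul hρ0.le, ← Real.rpow_mul hρ0.le, mul_comm]
  refine ⟨hsummα, ?_⟩
  by_cases hq1 : q 1 ≤ 0
  · have hq10 : q 1 = 0 := le_antisymm hq1 (hnn 1)
    have hzero : ∀ k, 1 ≤ k → q k = 0 := fun k hk => seq_zero_prop hz 1 k hk hq10
    have ha : ∑' k, q k = M := tsum_eq_single 0 (fun k hk => hzero k (by omega))
    have hSα : ∑' k, q k ^ α = M ^ α := by
      refine tsum_eq_single 0 (fun k hk => ?_)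
      rw [hzero k (by omega), Real.zero_rpow hα0.ne']
    rw [ha, hSα]
    have hMM : M ^ (α-1) * M = M ^ α := by
      rw [Real.rpow_sub_one h0.ne' α]
      field_simp
    nlinarith
  · push_neg at hq1
    have ha_lt : M < ∑' k, q k := by
      have h01 : q 0 + q 1 ≤ ∑' k, q k := by
        have h := Summable.sum_le_tsum ({0,1} : Finset ℕ) (fun k _ => hnn k) hsum
        simpa using h
      linarith
    set a := ∑' k, q k with hadef
    have ha0 : 0 < a := lt_trans h0 ha_lt
    set t := 1 - M / a with htdef
    have hMa1 : M / a < 1 := (div_lt_one ha0).mpr ha_lt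
    have ht0 : 0 < t := by rw [htdef]; linarith
    have ht1 : t < 1 := by
      rw [htdef]
      have : 0 < M / a := div_pos h0 ha0
      linarith
    have h1t : 1 - t = M / a := by rw [htdef]; ring
    have hg : HasSum (fun k => M * t^k) a := by
      have h := (hasSum_geometric_of_lt_one ht0.le ht1).mul_left M
      have e : M * (1-t)⁻¹ = a := by
        rw [h1t]
        field_simp
      rwa [e] at h
    have hgs := hg.summable
    have hgpos : ∀ k, 0 < M * t^k := fun k => by positivity
    have hd : Summable (fun k => q k - M * t^k) := hsum.sub hgs
    have hd0 : ∑' k, (q k - M * t^k) = 0 := by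
      rw [Summable.tsum_sub hsum hgs, hg.tsum_eq, ← hadef, sub_self]
    have htα1 : t ^ α < 1 := Real.rpow_lt_one ht0.le ht1 hα0
    have hBα : 0 < 1 - t^α := by linarith
    have hgα := geom_rpow hα0 h0.le ht0.le ht1
    have hkey : ∑' k, q k ^ α ≤ M^α * (1 - t^α)⁻¹ := by
      rcases seq_cross_data hnn hmax hlc hz ht0 hd hd0 with hqg | ⟨K, hKpos, hKneg⟩
      · have e : ∑' k, q k ^ α = M^α * (1 - t^α)⁻¹ := by
          rw [tsum_congr (fun k => by rw [hqg k] : ∀ k, q k ^ α = (M * t^k)^α)]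
          exact hgα.tsum_eq
        exact e.le
      · set w := fun k : ℕ => α * (M * t^k) ^ (α - 1) with hwdef
        have hwpos : ∀ k, 0 ≤ w k := fun k =>
          mul_nonneg hα0.le (Real.rpow_nonneg (hgpos k).le _)
        have hwmono : ∀ i j, i ≤ j → w i ≤ w j := by
          intro i j hij
          have h1 : (M*t^i)^(α-1) ≤ (M*t^j)^(α-1) :=
            Real.rpow_le_rpow_of_nonpos (hgpos j)
              (mul_le_mul_of_nonneg_left (pow_le_pow_of_le_one ht0.le ht1.le hij) h0.le)
              (by linarith)
          exact mul_le_mul_of_nonneg_left h1 hα0.le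
        -- w k * |d k| ≤ α * (M t^k)^α for k ≥ K
        have hgid : ∀ k, (M*t^k)^(α-1) * (M*t^k) = (M*t^k)^α := by
          intro k
          rw [← Real.rpow_add_one (hgpos k).ne' (α-1)]
          congr 1
          ring
        have hwd : Summable (fun k => w k * (q k - M * t^k)) := by
          rw [← summable_abs_iff]
          apply (_root_.summable_nat_add_iff K).mp
          apply Summable.of_nonneg_of_le (fun k => abs_nonneg _) (fun k => ?_)
            (((hgα.summable).mul_left α).comp_injective (add_right_injective K))
          · show _ ≤ α * (M*t^(K+k))^α
            rw [abs_mul, abs_of_nonneg (hwpos (k+K))]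
            have hdk : q (k+K) - M*t^(k+K) ≤ 0 := hKneg (k+K) (by omega)
            have habs : |q (k+K) - M*t^(k+K)| ≤ M*t^(k+K) := by
              rw [abs_of_nonpos hdk]
              have := hnn (k+K)
              linarith
            calc w (k+K) * |q (k+K) - M*t^(k+K)| ≤ w (k+K) * (M*t^(k+K)) :=
              mul_le_mul_of_nonneg_left habs (hwpos (k+K))
            _ = α * (M*t^(k+K))^α := by
                rw [hwdef]
                simp only
                rw [mul_assoc, hgid (k+K)]
            _ = α * (M*t^(K+k))^α := by rw [add_comm]
        have hcross : ∑' k, w k * (q k - M * t^k) ≤ 0 := by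
          have hneg := cross_sum (fun k => -w k) (fun k => q k - M * t^k) K hd hd0 hKpos hKneg
            (fun i j hij => by simpa using hwmono i j hij)
            (by simpa using hwd.neg)
          have e : ∑' k, -w k * (q k - M*t^k) = -∑' k, w k * (q k - M*t^k) := by
            rw [← tsum_neg]
            congr 1
            funext k
            ring
          rw [e] at hneg
          linarith
        have htan : ∀ k, q k ^ α ≤ (M*t^k)^α + w k * (q k - M*t^k) := fun k =>
          tangent_lt hα0 hα (hgpos k) (hnn k)
        calc ∑' k, q k ^ α ≤ ∑' k, ((M*t^k)^α + w k * (q k - M*t^k)) :=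
            Summable.tsum_le_tsum htan hsummα (hgα.summable.add hwd)
        _ = M^α*(1-t^α)⁻¹ + ∑' k, w k * (q k - M*t^k) := by
            rw [Summable.tsum_add hgα.summable hwd, hgα.tsum_eq]
        _ ≤ M^α*(1-t^α)⁻¹ := by linarith
    have hclaim := claimA_lt hα0 hα ht0.le ht1
    have e1 : M^α / (1 - t) = M^(α-1) * a := by
      rw [h1t, div_div_eq_mul_div, Real.rpow_sub_one h0.ne' α]
      ring
    have e2 : M^α * ((α-1)/2 + 1/(1-t)) = M^α*((α-1)/2) + M^(α-1)*a := by
      rw [mul_add, mul_one_div, e1]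
    have e3 : M^α * (α/(1-t^α)) = α * (M^α * (1-t^α)⁻¹) := by
      rw [div_eq_mul_inv]
      ring
    have hineq := mul_lt_mul_of_pos_left hclaim hMα
    rw [e2, e3] at hineq
    calc α * ∑' k, q k ^ α ≤ α * (M^α * (1-t^α)⁻¹) :=
      mul_le_mul_of_nonneg_left hkey hα0.le
    _ < M^α*((α-1)/2) + M^(α-1)*a := hineq




lemma neg_log_le {x : ℝ} (hx : 0 < x) : -Real.log x ≤ 2 / Real.sqrt x := by
  have hs : 0 < Real.sqrt x := Real.sqrt_pos.mpr hx
  have h := Real.log_le_sub_one_of_pos (inv_pos.mpr hs)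
  rw [Real.log_inv, Real.log_sqrt hx.le] at h
  have h2 : 0 < (Real.sqrt x)⁻¹ := inv_pos.mpr hs
  have e : (Real.sqrt x)⁻¹ = 1 / Real.sqrt x := by rw [one_div]
  rw [e] at h
  have h3 : -(Real.log x / 2) ≤ 1 / Real.sqrt x := by linarith
  have e2 : 2 / Real.sqrt x = 2 * (1 / Real.sqrt x) := by ring
  linarith [h3, e2.le, e2.ge]

lemma abs_mul_log_le {x c : ℝ} (hx : 0 ≤ x) (hx1 : x ≤ 1) (hc : 0 ≤ c) (hxc : x ≤ c) :
    |x * Real.log x| ≤ 2 * Real.sqrt c := by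
  rcases eq_or_lt_of_le hx with h|h
  · rw [← h]
    simp
  · have hlog : Real.log x ≤ 0 := Real.log_nonpos h.le hx1
    rw [abs_of_nonpos (mul_nonpos_iff.mpr (Or.inl ⟨hx, hlog⟩))]
    have h1 : -(x * Real.log x) = x * (-Real.log x) := by ring
    rw [h1]
    have h2 := neg_log_le h
    calc x * (-Real.log x) ≤ x * (2 / Real.sqrt x) :=
      mul_le_mul_of_nonneg_left h2 hx
    _ = 2 * (x / Real.sqrt x) := by ring
    _ = 2 * Real.sqrt x := by rw [Real.div_sqrt]
    _ ≤ 2 * Real.sqrt c := by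
        have := Real.sqrt_le_sqrt hxc
        linarith

lemma sqrt_pow_eq {ρ : ℝ} (hρ : 0 ≤ ρ) (k : ℕ) : Real.sqrt (ρ^k) = (Real.sqrt ρ)^k := by
  rw [show ρ^k = ((Real.sqrt ρ)^k)^2 by
    rw [← pow_mul, mul_comm, pow_mul, Real.sq_sqrt hρ]]
  exact Real.sqrt_sq (pow_nonneg (Real.sqrt_nonneg _) _)

lemma side_one {q : ℕ → ℝ} (hnn : ∀ k, 0 ≤ q k)
    (hmax : ∀ k, q k ≤ q 0) (hlc : ∀ k, q (k+2) * q k ≤ q (k+1)^2)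
    (hz : ∀ k, q k = 0 → q (k+1) = 0) (hsum : Summable q) (h0 : 0 < q 0) (hM1 : q 0 ≤ 1) :
    Summable (fun k => q k * Real.log (q k)) ∧
    q 0 / 2 + (Real.log (q 0) - 1) * (∑' k, q k) < ∑' k, q k * Real.log (q k) := by
  set M := q 0 with hMdef
  obtain ⟨C, ρ, hC, hρ0, hρ1, hbd⟩ := seq_geom_bound hnn hmax hlc hz hsum h0
  have hsρ1 : Real.sqrt ρ < 1 := by
    have := Real.sqrt_lt_sqrt hρ0.le hρ1
    rwa [Real.sqrt_one] at this
  have hsumlog : Summable (fun k => q k * Real.log (q k)) := by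
    rw [← summable_abs_iff]
    apply Summable.of_nonneg_of_le (fun k => abs_nonneg _) (fun k => ?_)
      ((summable_geometric_of_lt_one (Real.sqrt_nonneg ρ) hsρ1).mul_left (2 * Real.sqrt C))
    have h1 : q k ≤ C * ρ^k := hbd k
    have h2 : |q k * Real.log (q k)| ≤ 2 * Real.sqrt (C * ρ^k) :=
      abs_mul_log_le (hnn k) ((hmax k).trans hM1) (by positivity) h1
    calc |q k * Real.log (q k)| ≤ 2 * Real.sqrt (C * ρ^k) := h2
    _ = 2 * Real.sqrt C * (Real.sqrt ρ)^k := by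
        rw [Real.sqrt_mul hC.le, sqrt_pow_eq hρ0.le]
        ring
  refine ⟨hsumlog, ?_⟩
  by_cases hq1 : q 1 ≤ 0
  · have hq10 : q 1 = 0 := le_antisymm hq1 (hnn 1)
    have hzero : ∀ k, 1 ≤ k → q k = 0 := fun k hk => seq_zero_prop hz 1 k hk hq10
    have ha : ∑' k, q k = M := tsum_eq_single 0 (fun k hk => hzero k (by omega))
    have hS : ∑' k, q k * Real.log (q k) = M * Real.log M := by
      refine tsum_eq_single 0 (fun k hk => ?_)
      rw [hzero k (by omega)]
      simp
    rw [ha, hS]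
    nlinarith [h0]
  · push_neg at hq1
    have ha_lt : M < ∑' k, q k := by
      have h01 : q 0 + q 1 ≤ ∑' k, q k := by
        have h := Summable.sum_le_tsum ({0,1} : Finset ℕ) (fun k _ => hnn k) hsum
        simpa using h
      linarith
    set a := ∑' k, q k with hadef
    have ha0 : 0 < a := lt_trans h0 ha_lt
    set t := 1 - M / a with htdef
    have hMa1 : M / a < 1 := (div_lt_one ha0).mpr ha_lt
    have ht0 : 0 < t := by rw [htdef]; linarith
    have ht1 : t < 1 := by
      rw [htdef]
      have : 0 < M / a := div_pos h0 ha0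
      linarith
    have h1t : 1 - t = M / a := by rw [htdef]; ring
    have hu : 0 < 1 - t := by linarith
    have hg : HasSum (fun k => M * t^k) a := by
      have h := (hasSum_geometric_of_lt_one ht0.le ht1).mul_left M
      have e : M * (1-t)⁻¹ = a := by
        rw [h1t]
        field_simp
      rwa [e] at h
    have hgs := hg.summable
    have hgpos : ∀ k, 0 < M * t^k := fun k => by positivity
    have hd : Summable (fun k => q k - M * t^k) := hsum.sub hgs
    have hd0 : ∑' k, (q k - M * t^k) = 0 := by
      rw [Summable.tsum_sub hsum hgs, hg.tsum_eq, ← hadef, sub_self]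
    have hnt : ‖t‖ < 1 := by rwa [Real.norm_eq_abs, abs_of_nonneg ht0.le]
    have hkt := hasSum_coe_mul_geometric_of_norm_lt_one hnt
    -- sum of g log g
    have hglog : HasSum (fun k => (M*t^k) * Real.log (M*t^k))
        (a * Real.log M + (M*Real.log t) * (t/(1-t)^2)) := by
      have h1 : ∀ k:ℕ, (M*Real.log M) * t^k + (M*Real.log t) * ((k:ℝ) * t^k)
          = (M*t^k) * Real.log (M*t^k) := by
        intro k
        rw [Real.log_mul h0.ne' (pow_pos ht0 k).ne', Real.log_pow]
        ring
      have h2 := (hasSum_geometric_of_lt_one ht0.le ht1).mul_left (M*Real.log M)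
      have h3 := hkt.mul_left (M*Real.log t)
      have h4 := h2.add h3
      have e : M*Real.log M*(1-t)⁻¹ = a*Real.log M := by
        rw [h1t]
        field_simp
      rw [e] at h4
      rwa [funext h1] at h4
    -- the comparison
    have hkey : a * Real.log M + (M*Real.log t) * (t/(1-t)^2) ≤ ∑' k, q k * Real.log (q k) := by
      rcases seq_cross_data hnn hmax hlc hz ht0 hd hd0 with hqg | ⟨K, hKpos, hKneg⟩
      · have e : ∑' k, q k * Real.log (q k) = a * Real.log M + (M*Real.log t) * (t/(1-t)^2) := by
          rw [tsum_congr (fun k => by rw [hqg k] : ∀ k, q k * Real.log (q k) = (M*t^k) * Real.log (M*t^k))]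
          exact hglog.tsum_eq
        exact e.ge
      · set w := fun k : ℕ => 1 + Real.log (M * t^k) with hwdef
        have hwanti : ∀ i j, i ≤ j → w j ≤ w i := by
          intro i j hij
          have h1 : Real.log (M*t^j) ≤ Real.log (M*t^i) :=
            Real.log_le_log (hgpos j)
              (mul_le_mul_of_nonneg_left (pow_le_pow_of_le_one ht0.le ht1.le hij) h0.le)
          simpa [hwdef] using h1
        have hwb : ∀ k:ℕ, |w k| ≤ (1 + |Real.log M|) + (k:ℝ) * |Real.log t| := by
          intro k
          rw [hwdef]
          simp only
          rw [Real.log_mul h0.ne' (pow_pos ht0 k).ne', Real.log_pow]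
          calc |1 + (Real.log M + (k:ℝ) * Real.log t)| ≤ |1 + Real.log M| + |(k:ℝ)*Real.log t| := by
                rw [← add_assoc]
                exact abs_add_le _ _
          _ ≤ (1 + |Real.log M|) + (k:ℝ)*|Real.log t| := by
              rw [abs_mul, abs_of_nonneg (Nat.cast_nonneg k : (0:ℝ) ≤ k)]
              have := abs_add_le (1:ℝ) (Real.log M)
              simp at this
              linarith [this]
        have hcomp : Summable (fun k : ℕ =>
            ((1 + |Real.log M|) * (M * t^k) + |Real.log t| * M * ((k:ℝ) * t^k))) :=
          (hgs.mul_left (1 + |Real.log M|)).add ((hkt.summable).mul_left (|Real.log t| * M))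
        have hwd : Summable (fun k => w k * (q k - M * t^k)) := by
          rw [← summable_abs_iff]
          apply (_root_.summable_nat_add_iff K).mp
          apply Summable.of_nonneg_of_le (fun k => abs_nonneg _) (fun k => ?_)
            (hcomp.comp_injective (add_right_injective K))
          show _ ≤ (1 + |Real.log M|) * (M * t^(K+k)) + |Real.log t| * M * (((K+k:ℕ):ℝ) * t^(K+k))
          rw [abs_mul]
          have hdk : q (k+K) - M*t^(k+K) ≤ 0 := hKneg (k+K) (by omega)
          have habs : |q (k+K) - M*t^(k+K)| ≤ M*t^(k+K) := by
            rw [abs_of_nonpos hdk]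
            have := hnn (k+K)
            linarith
          have hKk : k + K = K + k := by omega
          rw [hKk] at habs hdk ⊢
          calc |w (K+k)| * |q (K+k) - M*t^(K+k)| ≤
              ((1 + |Real.log M|) + ((K+k:ℕ):ℝ)*|Real.log t|) * (M*t^(K+k)) := by
                apply mul_le_mul (hwb (K+k)) habs (abs_nonneg _)
                positivity
          _ = (1 + |Real.log M|) * (M * t^(K+k)) + |Real.log t| * M * (((K+k:ℕ):ℝ) * t^(K+k)) := by
              ring
        have hcross := cross_sum w (fun k => q k - M * t^k) K hd hd0 hKpos hKneg hwanti hwd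
        have htan : ∀ k, (M*t^k) * Real.log (M*t^k) + w k * (q k - M*t^k) ≤ q k * Real.log (q k) := by
          intro k
          have := tangent_log (hgpos k) (hnn k)
          simpa [hwdef] using this
        calc a * Real.log M + (M*Real.log t) * (t/(1-t)^2)
            = ∑' k, (M*t^k) * Real.log (M*t^k) := hglog.tsum_eq.symm
        _ ≤ ∑' k, ((M*t^k) * Real.log (M*t^k) + w k * (q k - M*t^k)) := by
            rw [Summable.tsum_add hglog.summable hwd]
            linarith
        _ ≤ ∑' k, q k * Real.log (q k) := Summable.tsum_le_tsum htan (hglog.summable.add hwd) hsumlog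
    -- final algebra using claim A₁
    have hA := claimA_one ht0.le ht1
    have eM : M = a*(1-t) := by
      rw [h1t]
      field_simp
    have e4 : a*Real.log M + (M*Real.log t)*(t/(1-t)^2) - (M/2 + (Real.log M - 1)*a)
        = (a/(1-t))*(t*Real.log t + (1-t^2)/2) := by
      generalize Real.log M = L
      rw [eM]
      field_simp
      ring
    have h5 : 0 < (a/(1-t))*(t*Real.log t + (1-t^2)/2) :=
      mul_pos (div_pos ha0 hu) hA
    linarith

lemma exists_mode (p : ℤ → ℝ) (hnn : ∀ n, 0 ≤ p n) (hsum : Summable p)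
    (h1 : ∑' n, p n = 1) : ∃ m, 0 < p m ∧ ∀ n, p n ≤ p m := by
  have hex : ∃ n0, 0 < p n0 := by
    by_contra h
    push_neg at h
    have hz : ∀ n, p n = 0 := fun n => le_antisymm (h n) (hnn n)
    have : (∑' n, p n) = 0 := by
      rw [tsum_congr hz]
      exact tsum_zero
    rw [h1] at this
    norm_num at this
  obtain ⟨n0, hn0⟩ := hex
  have hev : ∀ᶠ n in Filter.cofinite, p n < p n0 :=
    hsum.tendsto_cofinite_zero.eventually (gt_mem_nhds hn0)
  have hfin : {n : ℤ | p n0 ≤ p n}.Finite := by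
    apply (Filter.eventually_cofinite.mp hev).subset
    intro n hn
    simp only [Set.mem_setOf_eq] at *
    linarith
  have hne : (hfin.toFinset).Nonempty := ⟨n0, by simp [hfin.mem_toFinset]⟩
  obtain ⟨m, hmem, hm⟩ := Finset.exists_max_image hfin.toFinset p hne
  rw [hfin.mem_toFinset] at hmem
  simp only [Set.mem_setOf_eq] at hmem
  refine ⟨m, lt_of_lt_of_le hn0 hmem, fun n => ?_⟩
  by_cases hc : p n0 ≤ p n
  · exact hm n (hfin.mem_toFinset.mpr hc)
  · push_neg at hc
    linarith [hmem]


end RMC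

open RMC in
/-- For a log-concave pmf on `ℤ` and `α ∈ (0,∞)`,
`H_α(p) − H_∞(p) < log(α^{1/(α−1)})`, the right side read as `1` when `α = 1`. -/
theorem renyi_minEntropy_comparison (p : ℤ → ℝ) (hpmf : IsPMF p)
    (hlc : IsLogConcavePMF p) (α : ℝ) (hα : 0 < α) :
    renyiEnt α p - minEnt p < if α = 1 then 1 else Real.log α / (α - 1) := by
  obtain ⟨hnn, hsum, h1⟩ := hpmf
  obtain ⟨hlc1, hlc2⟩ := hlc
  obtain ⟨m, hm0, hmmax⟩ := exists_mode p hnn hsum h1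
  set M := p m with hMdef
  -- the two side sequences
  set qR : ℕ → ℝ := fun k => p (m + k) with hqR
  set qL : ℕ → ℝ := fun k => p (m - k) with hqL
  have hqR0 : qR 0 = M := by simp [hqR, hMdef]
  have hqL0 : qL 0 = M := by simp [hqL, hMdef]
  have hnnR : ∀ k, 0 ≤ qR k := fun k => hnn _
  have hnnL : ∀ k, 0 ≤ qL k := fun k => hnn _
  have hmaxR : ∀ k, qR k ≤ qR 0 := fun k => hqR0 ▸ hmmax _
  have hmaxL : ∀ k, qL k ≤ qL 0 := fun k => hqL0 ▸ hmmax _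
  have hlcR : ∀ k, qR (k+2) * qR k ≤ qR (k+1)^2 := by
    intro k
    have h := hlc1 (m + k + 1)
    have e1 : m + ((k:ℕ)+2 : ℕ) = m + (k:ℤ) + 1 + 1 := by push_cast; ring
    have e2 : m + ((k:ℕ)+1 : ℕ) = m + (k:ℤ) + 1 := by push_cast; ring
    have e3 : m + (k:ℤ) + 1 - 1 = m + (k:ℤ) := by ring
    simp only [hqR]
    rw [e1, e2]
    rw [e3] at h
    nlinarith [h]
  have hlcL : ∀ k, qL (k+2) * qL k ≤ qL (k+1)^2 := by
    intro k
    have h := hlc1 (m - k - 1)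
    have e1 : m - ((k:ℕ)+2 : ℕ) = m - (k:ℤ) - 1 - 1 := by push_cast; ring
    have e2 : m - ((k:ℕ)+1 : ℕ) = m - (k:ℤ) - 1 := by push_cast; ring
    have e3 : m - (k:ℤ) - 1 + 1 = m - (k:ℤ) := by ring
    simp only [hqL]
    rw [e1, e2]
    rw [e3] at h
    nlinarith [h]
  have hzR : ∀ k, qR k = 0 → qR (k+1) = 0 := by
    intro k hk
    by_contra hne
    have hpos : 0 < qR (k+1) := lt_of_le_of_ne (hnnR (k+1)) (Ne.symm hne)
    have e2 : m ≤ m + (k:ℤ) := by omega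
    have e3 : m + (k:ℤ) ≤ m + ((k:ℕ)+1 : ℕ) := by push_cast; omega
    have := hlc2 m (m + k) (m + ((k:ℕ)+1 : ℕ)) e2 e3 hm0 hpos
    simp only [hqR] at hk
    linarith
  have hzL : ∀ k, qL k = 0 → qL (k+1) = 0 := by
    intro k hk
    by_contra hne
    have hpos : 0 < qL (k+1) := lt_of_le_of_ne (hnnL (k+1)) (Ne.symm hne)
    have e3 : m - ((k:ℕ)+1 : ℕ) ≤ m - (k:ℤ) := by push_cast; omega
    have e2 : m - (k:ℤ) ≤ m := by omega
    have := hlc2 (m - ((k:ℕ)+1 : ℕ)) (m - k) m e3 e2 hpos hm0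
    simp only [hqL] at hk
    linarith
  have hinjR : Function.Injective (fun k : ℕ => m + (k:ℤ)) := by
    intro a b h
    simp only at h
    omega
  have hinjL : Function.Injective (fun k : ℕ => m - (k:ℤ)) := by
    intro a b h
    simp only at h
    omega
  have hsumR : Summable qR := by
    have := hsum.comp_injective hinjR
    exact this
  have hsumL : Summable qL := by
    have := hsum.comp_injective hinjL
    exact this
  have hM1 : M ≤ 1 := by
    have := Summable.le_tsum hsum m (fun n _ => hnn n)
    rw [h1] at this
    exact this
  -- splitting of sums over ℤ
  have hsplit : ∀ f : ℤ → ℝ, Summable (fun k : ℕ => f (m + k)) →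
      Summable (fun k : ℕ => f (m - k)) →
      Summable f ∧ ∑' n, f n = (∑' k : ℕ, f (m + k)) + (∑' k : ℕ, f (m - k)) - f m := by
    intro f hfR hfL
    set g : ℤ → ℝ := fun n => f (m + n) with hg
    have hgR : Summable (fun k : ℕ => g k) := hfR
    have hgL : Summable (fun k : ℕ => g (-((k:ℤ) + 1))) := by
      have h2 : Summable (fun k : ℕ => f (m - (k+1))) := by
        have := (_root_.summable_nat_add_iff 1).mpr hfL
        apply this.congr
        intro k
        congr 1 <;> omega
      apply h2.congr
      intro k
      simp only [hg]
      congr 1 <;> omega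
    have hgsum : Summable g := Summable.of_nat_of_neg_add_one hgR hgL
    have hfsum : Summable f := by
      have h6 : Summable (fun n : ℤ => f ((Equiv.addLeft m) n)) := hgsum.congr (fun n => rfl)
      exact (Equiv.addLeft m).summable_iff.mp h6
    constructor
    · exact hfsum
    · have e1 : ∑' n, f n = ∑' n, g n := by
        rw [hg]
        exact ((Equiv.addLeft m).tsum_eq f).symm
      have e2 : ∑' n : ℤ, g n = (∑' k : ℕ, g k) + ∑' k : ℕ, g (-((k:ℤ)+1)) :=
        tsum_of_nat_of_neg_add_one hgR hgL
      have e3 : ∑' k : ℕ, g (-((k:ℤ)+1)) = ∑' k : ℕ, f (m - (k+1)) := by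
        apply tsum_congr
        intro k
        simp only [hg]
        congr 1 <;> omega
      have e4 : ∑' k : ℕ, f (m - k) = f m + ∑' k : ℕ, f (m - (k+1)) := by
        have h5 : Summable (fun k : ℕ => f (m - k)) := hfL
        have := Summable.tsum_eq_zero_add h5
        simp only [Nat.cast_zero, sub_zero] at this
        rw [this]
        refine congrArg (fun x => f m + x) (tsum_congr fun k => ?_)
        congr 1 <;> omega
      rw [e1, e2, e3, e4]
      ring
  -- total masses
  have hmass := hsplit p hsumR hsumL
  have hmass2 : (∑' k, qR k) + (∑' k, qL k) = 1 + M := by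
    have := hmass.2
    rw [h1] at this
    simp only [hqR, hqL] at *
    linarith
  -- sup = M
  have hbdd : BddAbove (Set.range p) := by
    refine ⟨M, ?_⟩
    rintro x ⟨n, rfl⟩
    exact hmmax n
  have hsup : (⨆ n, p n) = M := le_antisymm (ciSup_le hmmax) (le_ciSup hbdd m)
  rw [minEnt, hsup]
  by_cases hone : α = 1
  · subst hone
    rw [renyiEnt, if_pos rfl, if_pos rfl]
    -- Shannon case
    obtain ⟨hsumlogR, hR⟩ := side_one hnnR hmaxR hlcR hzR hsumR (hqR0 ▸ hm0) (hqR0 ▸ hM1)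
    obtain ⟨hsumlogL, hL⟩ := side_one hnnL hmaxL hlcL hzL hsumL (hqL0 ▸ hm0) (hqL0 ▸ hM1)
    rw [hqR0] at hR
    rw [hqL0] at hL
    have hsplitlog := hsplit (fun n => p n * Real.log (p n))
      (hsumlogR.congr (fun k => rfl)) (hsumlogL.congr (fun k => rfl))
    have hS := hsplitlog.2
    rw [← hMdef] at hS
    simp only [hqR, hqL] at hR hL hmass2
    have hprod : (Real.log M - 1) * (∑' k : ℕ, p (m + (k:ℤ))) + (Real.log M - 1) * (∑' k : ℕ, p (m - (k:ℤ)))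
        = (Real.log M - 1) * (1 + M) := by
      rw [← mul_add, hmass2]
    linarith [hR, hL, hS, hprod]
  · rw [renyiEnt, if_neg hone, if_neg hone]
    rcases lt_or_gt_of_ne hone with hlt | hgt
    · -- α < 1
      obtain ⟨hsumαR, hR⟩ := side_lt1 hα hlt hnnR hmaxR hlcR hzR hsumR (hqR0 ▸ hm0)
      obtain ⟨hsumαL, hL⟩ := side_lt1 hα hlt hnnL hmaxL hlcL hzL hsumL (hqL0 ▸ hm0)
      rw [hqR0] at hR
      rw [hqL0] at hL
      have hsplitα := hsplit (fun n => p n ^ α)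
        (hsumαR.congr (fun k => rfl)) (hsumαL.congr (fun k => rfl))
      have hS := hsplitα.2
      set S := ∑' n, p n ^ α with hSdef
      have hMα : 0 < M ^ α := Real.rpow_pos_of_pos hm0 α
      have hMα1 : 0 < M ^ (α-1) := Real.rpow_pos_of_pos hm0 (α-1)
      have hMM : M ^ (α-1) * M = M ^ α := by
        rw [Real.rpow_sub_one hm0.ne' α]
        field_simp
      have hKey : α * S < M ^ (α-1) := by
        rw [← hMdef] at hS
        simp only [hqR, hqL] at hR hL hmass2
        have hprod : M^(α-1) * (∑' k : ℕ, p (m + (k:ℤ))) + M^(α-1) * (∑' k : ℕ, p (m - (k:ℤ)))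
            = M^(α-1) * (1 + M) := by
          rw [← mul_add, hmass2]
        have hexp : M^(α-1) * (1 + M) = M^(α-1) + M^α := by
          rw [mul_add, mul_one, hMM]
        have hαS : α * S = α * (∑' k:ℕ, p (m+(k:ℤ))^α) + α * (∑' k:ℕ, p (m-(k:ℤ))^α) - α * M^α := by
          rw [hS]; ring
        linarith [hR, hL, hprod, hexp, hαS]
      have hS0 : 0 < S := by
        have h2 : p m ^ α ≤ S := Summable.le_tsum hsplitα.1 m (fun n _ => Real.rpow_nonneg (hnn n) α)
        have hpmα : 0 < p m ^ α := Real.rpow_pos_of_pos hm0 α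
        exact lt_of_lt_of_le hpmα h2
      have hlog : Real.log α + Real.log S < (α-1) * Real.log M := by
        have h3 : Real.log (α * S) < Real.log (M ^ (α-1)) :=
          Real.log_lt_log (by positivity) hKey
        rw [Real.log_mul hα.ne' hS0.ne', Real.log_rpow hm0] at h3
        exact h3
      have e : (1-α)⁻¹ * Real.log S + Real.log M = ((α-1) * Real.log M - Real.log S)/(α-1) := by
        have hne : α - 1 ≠ 0 := by intro h; apply hone; linarith
        have hne' : 1 - α ≠ 0 := by intro h; apply hone; linarith
        field_simp
        ring
      rw [sub_neg_eq_add, e]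
      rw [div_lt_div_right_of_neg (by linarith : α - 1 < 0)]
      linarith
    · -- α > 1
      obtain ⟨hsumαR, hR⟩ := side_gt1 hgt hnnR hmaxR hlcR hzR hsumR (hqR0 ▸ hm0)
      obtain ⟨hsumαL, hL⟩ := side_gt1 hgt hnnL hmaxL hlcL hzL hsumL (hqL0 ▸ hm0)
      rw [hqR0] at hR
      rw [hqL0] at hL
      have hsplitα := hsplit (fun n => p n ^ α)
        (hsumαR.congr (fun k => rfl)) (hsumαL.congr (fun k => rfl))
      have hS := hsplitα.2
      set S := ∑' n, p n ^ α with hSdef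
      have hMα : 0 < M ^ α := Real.rpow_pos_of_pos hm0 α
      have hMα1 : 0 < M ^ (α-1) := Real.rpow_pos_of_pos hm0 (α-1)
      have hMM : M ^ (α-1) * M = M ^ α := by
        rw [Real.rpow_sub_one hm0.ne' α]
        field_simp
      have hKey : M ^ (α-1) < α * S := by
        rw [← hMdef] at hS
        simp only [hqR, hqL] at hR hL hmass2
        have hprod : M^(α-1) * (∑' k : ℕ, p (m + (k:ℤ))) + M^(α-1) * (∑' k : ℕ, p (m - (k:ℤ)))
            = M^(α-1) * (1 + M) := by
          rw [← mul_add, hmass2]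
        have hexp : M^(α-1) * (1 + M) = M^(α-1) + M^α := by
          rw [mul_add, mul_one, hMM]
        have hαS : α * S = α * (∑' k:ℕ, p (m+(k:ℤ))^α) + α * (∑' k:ℕ, p (m-(k:ℤ))^α) - α * M^α := by
          rw [hS]; ring
        linarith [hR, hL, hprod, hexp, hαS]
      have hS0 : 0 < S := by
        have hKpos : 0 < α * S := lt_trans hMα1 hKey
        nlinarith [hKpos, hα]
      have hlog : (α-1) * Real.log M < Real.log α + Real.log S := by
        have h3 : Real.log (M ^ (α-1)) < Real.log (α * S) :=
          Real.log_lt_log hMα1 hKey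
        rw [Real.log_mul hα.ne' hS0.ne', Real.log_rpow hm0] at h3
        exact h3
      have e : (1-α)⁻¹ * Real.log S + Real.log M = ((α-1) * Real.log M - Real.log S)/(α-1) := by
        have hne : α - 1 ≠ 0 := by intro h; apply hone; linarith
        have hne' : 1 - α ≠ 0 := by intro h; apply hone; linarith
        field_simp
        ring
      rw [sub_neg_eq_add, e]
      rw [div_lt_div_iff_of_pos_right (by linarith : 0 < α - 1)]
      linarith
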